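/- Let A ∈ ℝ^{n×k} and let S ∈ {0,1}^{n×k} be a binary matrix with exactly one nonzero entry in each row. Let v ∈ {−1,+1}^k be a random vector with independent Rademacher entries (each entry equals +1 with probability 1/2 and −1 with probability 1/2), and define c = Sv and y = c ∘ (Av), where ∘ denotes the entrywise product of vectors. Then E[y] = (S∘A)·1, where 1 is the all-ones vector, and E[ ‖y − (S∘A)·1‖₂² ] = ‖A − S∘A‖_F². -/

import Mathlib

open MeasureTheory ProbabilityTheory Matrix
open scoped Classical

/-- Squared Frobenius norm of a real matrix. -/
noncomputable def frobSq {n k : ℕ} (M : Matrix (Fin n) (Fin k) ℝ) : ℝ :=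
  ∑ i, ∑ j, (M i j) ^ 2

/-- Hadamard (entrywise) product of two real matrices. -/
def hadam {n k : ℕ} (S A : Matrix (Fin n) (Fin k) ℝ) : Matrix (Fin n) (Fin k) ℝ :=
  fun i j => S i j * A i j

section Aux

variable {k : ℕ} {Ω : Type} [MeasureSpace Ω] [IsProbabilityMeasure (ℙ : Measure Ω)]
  (v : Ω → Fin k → ℝ)

lemma aux_mean (hvmeas : ∀ j, Measurable fun ω => v ω j)
    (hvRad : ∀ j, Measure.map (fun ω => v ω j) ℙ
      = (1 / 2 : ENNReal) • Measure.dirac (1 : ℝ)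
        + (1 / 2 : ENNReal) • Measure.dirac (-1 : ℝ)) (j : Fin k) :
    ∫ ω, v ω j ∂ℙ = 0 := by
  have hint : ∀ (a : ℝ), Integrable (fun x : ℝ => x) ((1/2 : ENNReal) • Measure.dirac a) := by
    intro a
    refine ⟨aestronglyMeasurable_id, ?_⟩
    rw [HasFiniteIntegral, lintegral_smul_measure, lintegral_dirac]
    exact ENNReal.mul_lt_top (by norm_num) (by simp)
  have h0 : ∫ ω, v ω j ∂ℙ = ∫ x, x ∂(Measure.map (fun ω => v ω j) ℙ) :=
    (integral_map (hvmeas j).aemeasurable aestronglyMeasurable_id).symm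
  rw [h0, hvRad j, integral_add_measure (hint 1) (hint (-1)), integral_smul_measure,
    integral_smul_measure, integral_dirac, integral_dirac]
  norm_num

lemma aux_sq_ae (hvmeas : ∀ j, Measurable fun ω => v ω j)
    (hvRad : ∀ j, Measure.map (fun ω => v ω j) ℙ
      = (1 / 2 : ENNReal) • Measure.dirac (1 : ℝ)
        + (1 / 2 : ENNReal) • Measure.dirac (-1 : ℝ)) (j : Fin k) :
    ∀ᵐ ω ∂(ℙ : Measure Ω), v ω j ^ 2 = 1 := by
  have hs : MeasurableSet ({1, -1} : Set ℝ)ᶜ :=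
    ((measurableSet_singleton (-1 : ℝ)).insert 1).compl
  rw [ae_iff]
  have h1 : {ω | ¬ v ω j ^ 2 = 1} = (fun ω => v ω j) ⁻¹' ({1, -1} : Set ℝ)ᶜ := by
    ext ω; simp [sq_eq_one_iff]
  rw [h1, ← Measure.map_apply (hvmeas j) hs, hvRad j]
  simp [Measure.dirac_apply' _ hs]

end Aux

/-- **Lemma (coloring-based estimator for one-nonzero-per-row patterns).** -/
theorem stmt16 {n k : ℕ} {Ω : Type} [MeasureSpace Ω]
    [IsProbabilityMeasure (ℙ : Measure Ω)]
    (A S : Matrix (Fin n) (Fin k) ℝ)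
    (hS01 : ∀ i j, S i j = 0 ∨ S i j = 1)
    (hrow : ∀ i, (Finset.univ.filter fun j => S i j = 1).card = 1)
    (v : Ω → Fin k → ℝ)
    (hvmeas : ∀ j, Measurable fun ω => v ω j)
    (hvRad : ∀ j, Measure.map (fun ω => v ω j) ℙ
      = (1 / 2 : ENNReal) • Measure.dirac (1 : ℝ)
        + (1 / 2 : ENNReal) • Measure.dirac (-1 : ℝ))
    (hvindep : iIndepFun (fun j ω => v ω j) ℙ) :
    (∀ i, ∫ ω, (S *ᵥ v ω) i * (A *ᵥ v ω) i ∂ℙ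
        = (hadam S A *ᵥ fun _ => (1 : ℝ)) i) ∧
    (∫ ω, ∑ i, ((S *ᵥ v ω) i * (A *ᵥ v ω) i
        - (hadam S A *ᵥ fun _ => (1 : ℝ)) i) ^ 2 ∂ℙ
      = frobSq (A - hadam S A)) := by
  -- basic a.e. facts
  have hsq : ∀ j, ∀ᵐ ω ∂(ℙ : Measure Ω), v ω j ^ 2 = 1 := aux_sq_ae v hvmeas hvRad
  have habs : ∀ j, ∀ᵐ ω ∂(ℙ : Measure Ω), |v ω j| = 1 := by
    intro j
    filter_upwards [hsq j] with ω hω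
    have := abs_eq_abs.mpr (sq_eq_one_iff.mp hω)
    simpa using this
  -- integrability of pairwise products
  have hintVV : ∀ j j', Integrable (fun ω => v ω j * v ω j') (ℙ : Measure Ω) := by
    intro j j'
    refine Integrable.mono' (integrable_const (1 : ℝ))
      (((hvmeas j).mul (hvmeas j')).aestronglyMeasurable) ?_
    filter_upwards [habs j, habs j'] with ω h1 h2
    rw [Real.norm_eq_abs, abs_mul, h1, h2]; norm_num
  -- second moment matrix
  have hpair : ∀ j j', ∫ ω, v ω j * v ω j' ∂ℙ = if j = j' then 1 else 0 := by
    intro j j'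
    by_cases h : j = j'
    · subst h
      rw [if_pos rfl]
      have : ∫ ω, v ω j * v ω j ∂ℙ = ∫ _ω, (1 : ℝ) ∂(ℙ : Measure Ω) := by
        refine integral_congr_ae ?_
        filter_upwards [hsq j] with ω hω
        rw [← sq]; exact hω
      rw [this]; simp
    · rw [if_neg h]
      have hind : IndepFun (fun ω => v ω j) (fun ω => v ω j') (ℙ : Measure Ω) :=
        hvindep.indepFun h
      have := hind.integral_mul_eq_mul_integral ((hvmeas j).aestronglyMeasurable)
        ((hvmeas j').aestronglyMeasurable)
      have hm : ∫ ω, v ω j * v ω j' ∂ℙ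
          = (∫ ω, v ω j ∂ℙ) * ∫ ω, v ω j' ∂ℙ := this
      rw [hm, aux_mean v hvmeas hvRad j, zero_mul]
  -- bilinear expectation identity
  have hbilin : ∀ (w u : Fin k → ℝ),
      ∫ ω, (∑ j, w j * v ω j) * (∑ j, u j * v ω j) ∂ℙ = ∑ j, w j * u j := by
    intro w u
    have hexp : ∀ ω, (∑ j, w j * v ω j) * (∑ j, u j * v ω j)
        = ∑ j, ∑ j', (w j * u j') * (v ω j * v ω j') := by
      intro ω
      rw [Finset.sum_mul_sum]
      exact Finset.sum_congr rfl fun j _ => Finset.sum_congr rfl fun j' _ => by ring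
    simp_rw [hexp]
    rw [integral_finset_sum _ (fun j _ => integrable_finset_sum _
      (fun j' _ => (hintVV j j').const_mul _))]
    have : ∀ j ∈ Finset.univ, ∫ ω, ∑ j', (w j * u j') * (v ω j * v ω j') ∂ℙ
        = w j * u j := by
      intro j _
      rw [integral_finset_sum _ (fun j' _ => (hintVV j j').const_mul _)]
      have : ∀ j' ∈ Finset.univ, ∫ ω, (w j * u j') * (v ω j * v ω j') ∂ℙ
          = (w j * u j') * if j = j' then 1 else 0 := by
        intro j' _
        rw [integral_const_mul, hpair j j']
      rw [Finset.sum_congr rfl this]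
      simp [mul_ite]
    rw [Finset.sum_congr rfl this]
  -- integrability of squared linear forms
  have hintSq : ∀ (w : Fin k → ℝ),
      Integrable (fun ω => (∑ j, w j * v ω j) ^ 2) (ℙ : Measure Ω) := by
    intro w
    have hexp : ∀ ω, (∑ j, w j * v ω j) ^ 2
        = ∑ j, ∑ j', (w j * w j') * (v ω j * v ω j') := by
      intro ω
      rw [sq, Finset.sum_mul_sum]
      exact Finset.sum_congr rfl fun j _ => Finset.sum_congr rfl fun j' _ => by ring
    simp_rw [hexp]
    exact integrable_finset_sum _ (fun j _ => integrable_finset_sum _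
      (fun j' _ => (hintVV j j').const_mul _))
  -- rewrite mulVec applications
  have hSv : ∀ ω i, (S *ᵥ v ω) i = ∑ j, S i j * v ω j := by
    intro ω i; simp [mulVec, dotProduct]
  have hAv : ∀ ω i, (A *ᵥ v ω) i = ∑ j, A i j * v ω j := by
    intro ω i; simp [mulVec, dotProduct]
  have hm : ∀ i, (hadam S A *ᵥ fun _ => (1 : ℝ)) i = ∑ j, S i j * A i j := by
    intro i; simp [hadam, mulVec, dotProduct]
  constructor
  · intro i
    have : ∀ ω, (S *ᵥ v ω) i * (A *ᵥ v ω) i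
        = (∑ j, S i j * v ω j) * (∑ j, A i j * v ω j) := by
      intro ω; rw [hSv, hAv]
    simp_rw [this]
    rw [hbilin (S i) (A i), hm]
  · -- structure of S
    have hj0 : ∀ i, ∃ j0, S i j0 = 1 ∧ ∀ j, S i j = if j = j0 then 1 else 0 := by
      intro i
      obtain ⟨j0, hj0⟩ := Finset.card_eq_one.mp (hrow i)
      refine ⟨j0, ?_, ?_⟩
      · have : j0 ∈ Finset.univ.filter fun j => S i j = 1 := by rw [hj0]; simp
        simpa using (Finset.mem_filter.mp this).2
      · intro j
        by_cases h : j = j0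
        · subst h
          have : j ∈ Finset.univ.filter fun j' => S i j' = 1 := by rw [hj0]; simp
          simp [(Finset.mem_filter.mp this).2]
        · rw [if_neg h]
          rcases hS01 i j with h0 | h1
          · exact h0
          · exfalso
            have : j ∈ Finset.univ.filter fun j' => S i j' = 1 := by simp [h1]
            rw [hj0, Finset.mem_singleton] at this
            exact h this
    choose j0 hSj0 hSite using hj0
    set B : Matrix (Fin n) (Fin k) ℝ := A - hadam S A with hB
    have hBij : ∀ i j, B i j = A i j - S i j * A i j := by
      intro i j; simp [hB, hadam]
    -- a.e. pointwise identity
    have hAE : ∀ᵐ ω ∂(ℙ : Measure Ω),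
        ∑ i, ((S *ᵥ v ω) i * (A *ᵥ v ω) i - (hadam S A *ᵥ fun _ => (1 : ℝ)) i) ^ 2
        = ∑ i, (∑ j, B i j * v ω j) ^ 2 := by
      have hall : ∀ᵐ ω ∂(ℙ : Measure Ω), ∀ j, v ω j ^ 2 = 1 := ae_all_iff.mpr hsq
      filter_upwards [hall] with ω hv
      refine Finset.sum_congr rfl fun i _ => ?_
      have hc : (S *ᵥ v ω) i = v ω (j0 i) := by
        rw [hSv]
        have : ∀ j, S i j * v ω j = if j = j0 i then v ω j else 0 := by
          intro j; rw [hSite i j]; by_cases h : j = j0 i <;> simp [h]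
        rw [Finset.sum_congr rfl (fun j _ => this j), Finset.sum_ite_eq' Finset.univ (j0 i)]
        simp
      have hmi : (hadam S A *ᵥ fun _ => (1 : ℝ)) i = A i (j0 i) := by
        rw [hm]
        have : ∀ j, S i j * A i j = if j = j0 i then A i j else 0 := by
          intro j; rw [hSite i j]; by_cases h : j = j0 i <;> simp [h]
        rw [Finset.sum_congr rfl (fun j _ => this j), Finset.sum_ite_eq' Finset.univ (j0 i)]
        simp
      have hBs : ∑ j, B i j * v ω j = (∑ j, A i j * v ω j) - A i (j0 i) * v ω (j0 i) := by
        have h1 : ∀ j, B i j * v ω j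
            = A i j * v ω j - (if j = j0 i then A i j * v ω j else 0) := by
          intro j
          rw [hBij, hSite i j]
          by_cases h : j = j0 i <;> simp [h] <;> ring
        rw [Finset.sum_congr rfl (fun j _ => h1 j), Finset.sum_sub_distrib,
          Finset.sum_ite_eq' Finset.univ (j0 i)]
        simp
      rw [hc, hmi, hAv, hBs]
      have hvj := hv (j0 i)
      set T := ∑ j, A i j * v ω j
      set a := A i (j0 i)
      set x := v ω (j0 i)
      linear_combination (T ^ 2 - a ^ 2) * hvj
    rw [integral_congr_ae hAE,
      integral_finset_sum _ (fun i _ => hintSq (B i))]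
    have : ∀ i ∈ Finset.univ, ∫ ω, (∑ j, B i j * v ω j) ^ 2 ∂ℙ = ∑ j, B i j ^ 2 := by
      intro i _
      have hsq2 : ∀ ω, (∑ j, B i j * v ω j) ^ 2
          = (∑ j, B i j * v ω j) * (∑ j, B i j * v ω j) := fun ω => sq _
      simp_rw [hsq2]
      rw [hbilin (B i) (B i)]
      exact Finset.sum_congr rfl fun j _ => (sq _).symm
    rw [Finset.sum_congr rfl this]
    simp [frobSq, hB]
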